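/- (Case 1 of the SP-WENO case analysis.) Assume Δz_{i+1/2} ≠ 0 and θ_i^+ > 1 and θ_{i+1}^- > 1, and that the weights are consistent, i.e. -3/8 ≤ C_1, C_2 ≤ 1/8. Then the sign-property constraint w̃_0(1 - θ_{i+1}^-) + w_1(1 - θ_i^+) ≥ 0 holds if and only if C_1 = C_2 = 1/8 (equivalently w_1 = w̃_0 = 0), and in that case the reconstructed jump vanishes: ⟦z⟧_{i+1/2} = 0. -/
import Mathlib


/-- Case 1 of the SP-WENO case analysis: if `Δz_{i+1/2} ≠ 0`,
`θ⁺_i > 1`, `θ⁻_{i+1} > 1`, and the weights are consistent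
(`-3/8 ≤ C₁, C₂ ≤ 1/8`), then the sign-property constraint
`w̃₀(1 - θ⁻_{i+1}) + w₁(1 - θ⁺_i) ≥ 0` holds iff `C₁ = C₂ = 1/8`
(equivalently `w₁ = w̃₀ = 0`), and in that case the reconstructed jump vanishes. -/
theorem sp_weno_case1 (zm z0 z1 z2 C1 C2 : ℝ) (hΔ : z1 - z0 ≠ 0)
    (hθp : (z0 - zm)/(z1 - z0) > 1) (hθm : (z2 - z1)/(z1 - z0) > 1)
    (hC1l : -(3/8) ≤ C1) (hC1u : C1 ≤ 1/8)
    (hC2l : -(3/8) ≤ C2) (hC2u : C2 ≤ 1/8) :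
    ((1/4 - 2*C2)*(1 - (z2 - z1)/(z1 - z0))
        + (1/4 - 2*C1)*(1 - (z0 - zm)/(z1 - z0)) ≥ 0
      ↔ (C1 = 1/8 ∧ C2 = 1/8)) ∧
    ((C1 = 1/8 ∧ C2 = 1/8) →
      ((1/4 - 2*C2)*(3*z1 - z2) + (3/4 + 2*C2)*(z0 + z1))/2
        - ((3/4 + 2*C1)*(z0 + z1) + (1/4 - 2*C1)*(3*z0 - zm))/2 = 0) := by
  have h1 : 1 - (z2 - z1)/(z1 - z0) < 0 := by linarith
  have h2 : 1 - (z0 - zm)/(z1 - z0) < 0 := by linarith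
  have hw1 : (0:ℝ) ≤ 1/4 - 2*C1 := by linarith
  have hw2 : (0:ℝ) ≤ 1/4 - 2*C2 := by linarith
  constructor
  · constructor
    · intro h
      have t1 : (1/4 - 2*C2)*(1 - (z2 - z1)/(z1 - z0)) ≤ 0 :=
        mul_nonpos_of_nonneg_of_nonpos hw2 h1.le
      have t2 : (1/4 - 2*C1)*(1 - (z0 - zm)/(z1 - z0)) ≤ 0 :=
        mul_nonpos_of_nonneg_of_nonpos hw1 h2.le
      have e1 : (1/4 - 2*C1)*(1 - (z0 - zm)/(z1 - z0)) = 0 := le_antisymm t2 (by linarith)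
      have e2 : (1/4 - 2*C2)*(1 - (z2 - z1)/(z1 - z0)) = 0 := le_antisymm t1 (by linarith)
      have c1 : 1/4 - 2*C1 = 0 := by
        rcases mul_eq_zero.mp e1 with h' | h'
        · exact h'
        · linarith
      have c2 : 1/4 - 2*C2 = 0 := by
        rcases mul_eq_zero.mp e2 with h' | h'
        · exact h'
        · linarith
      exact ⟨by linarith, by linarith⟩
    · rintro ⟨rfl, rfl⟩
      norm_num
  · rintro ⟨rfl, rfl⟩
    ring
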